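/- Let 𝒮 = (S_1, …, S_K) be a finite collection of finite strings over an alphabet Σ and let w be a nonempty substring of 𝒮. Then the following are equivalent: (i) for every character a ∈ Σ, EndPos(a·w) ≠ EndPos(w); (ii) w is a prefix of some S_i, or w is left-branching in 𝒮 (i.e., there exist characters a ≠ b such that both a·w and b·w are substrings of 𝒮). (Condition (i) says exactly that w is the unique longest string of its endpos-equivalence class, i.e., w = long(v) for a node v of the DAWG of 𝒮; this equivalence underlies the correspondence between DAWG nodes of 𝒮 and suffix tree nodes of the reversed collection.) -/

import Mathlib

/-- `EndPos S w` is the set of ending positions of the nonempty string `w` in the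
collection `S = (S 0, …, S (K-1))`: pairs `(i, j)` with `|w| ≤ j ≤ |S i|` (positions
being 1-based) such that `w` equals the length-`|w|` substring of `S i` ending at
position `j`. -/
def EndPos {α : Type*} {K : ℕ} (S : Fin K → List α) (w : List α) :
    Set (Fin K × ℕ) :=
  {p | w.length ≤ p.2 ∧ p.2 ≤ (S p.1).length ∧
    w = ((S p.1).take p.2).drop (p.2 - w.length)}

section Aux

variable {α : Type*} {K : ℕ} {S : Fin K → List α} {w : List α}

lemma EndPos.cons_subset (a : α) : EndPos S (a :: w) ⊆ EndPos S w := by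
  rintro ⟨i, j⟩ ⟨h1, h2, h3⟩
  simp only [List.length_cons] at h1
  refine ⟨by omega, h2, ?_⟩
  calc w = (a :: w).tail := rfl
    _ = (((S i).take j).drop (j - (a :: w).length)).tail := by rw [← h3]
    _ = ((S i).take j).drop (j - (a :: w).length + 1) := List.tail_drop
    _ = ((S i).take j).drop (j - w.length) := by
        congr 1; simp only [List.length_cons]; omega

lemma EndPos.exists_cons {i : Fin K} {j : ℕ} (h : (i, j) ∈ EndPos S w)
    (hj : w.length < j) : ∃ a, (i, j) ∈ EndPos S (a :: w) := by
  obtain ⟨h1, h2, h3⟩ := h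
  dsimp only at h1 h2 h3
  set u := ((S i).take j).drop (j - (w.length + 1)) with hu
  have hlen : u.length = w.length + 1 := by
    simp only [hu, List.length_drop, List.length_take]; omega
  have hne : u ≠ [] := by
    intro h0; rw [h0] at hlen; simp at hlen
  obtain ⟨a, u', huu⟩ := List.exists_cons_of_ne_nil hne
  have htail : u.tail = w := by
    rw [hu, List.tail_drop]
    have : j - (w.length + 1) + 1 = j - w.length := by omega
    rw [this, ← h3]
  have hu' : u' = w := by rw [huu] at htail; simpa using htail
  refine ⟨a, ?_, h2, ?_⟩
  · simp only [List.length_cons]; omega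
  · rw [show j - (a :: w).length = j - (w.length + 1) by simp, ← hu, huu, hu']

lemma EndPos.infix_of_mem {i : Fin K} {j : ℕ} (h : (i, j) ∈ EndPos S w) :
    w <:+: S i := by
  obtain ⟨h1, h2, h3⟩ := h
  rw [h3]
  exact (List.drop_suffix _ _).isInfix.trans (List.take_prefix _ _).isInfix

lemma EndPos.mem_of_infix {i : Fin K} (h : w <:+: S i) :
    ∃ j, (i, j) ∈ EndPos S w := by
  obtain ⟨s, t, hst⟩ := h
  refine ⟨s.length + w.length, by omega, ?_, ?_⟩
  · rw [← hst]; simp [List.length_append]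
  · rw [← hst]
    have h1 : ((s ++ w) ++ t).take (s.length + w.length) = s ++ w :=
      List.take_left' (by simp)
    rw [h1, Nat.add_sub_cancel, List.drop_left]

lemma EndPos.prefix_of_mem {i : Fin K} {j : ℕ} (h : (i, j) ∈ EndPos S w)
    (hj : j = w.length) : w <+: S i := by
  obtain ⟨h1, h2, h3⟩ := h
  subst hj
  rw [Nat.sub_self, List.drop_zero] at h3
  rw [h3]
  exact List.take_prefix _ _

lemma EndPos.head_eq {i : Fin K} {j : ℕ} {a c : α}
    (h1 : (i, j) ∈ EndPos S (a :: w)) (h2 : (i, j) ∈ EndPos S (c :: w)) :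
    a = c := by
  obtain ⟨-, -, e1⟩ := h1
  obtain ⟨-, -, e2⟩ := h2
  simp only [List.length_cons] at e1 e2
  have : (a :: w : List α) = c :: w := e1.trans e2.symm
  exact (List.cons.injEq _ _ _ _).mp this |>.1

end Aux

/-- For a nonempty substring `w` of `S`, the following are equivalent:
(i) for every character `a`, `EndPos (a·w) ≠ EndPos w`
(i.e. `w` is the longest string of its endpos-equivalence class);
(ii) `w` is a prefix of some `S i`, or `w` is left-branching in `S`. -/
theorem longest_in_class_iff_prefix_or_leftBranching {α : Type*} (K : ℕ)
    (S : Fin K → List α) (w : List α) (hw : w ≠ []) (hsub : ∃ i, w <:+: S i) :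
    (∀ a : α, EndPos S (a :: w) ≠ EndPos S w) ↔
      ((∃ i, w <+: S i) ∨
        ∃ a b : α, a ≠ b ∧ (∃ i, (a :: w) <:+: S i) ∧ (∃ i, (b :: w) <:+: S i)) := by
  constructor
  · intro hi
    by_contra hcon
    push_neg at hcon
    obtain ⟨hnp, hnb⟩ := hcon
    obtain ⟨i0, hi0⟩ := hsub
    obtain ⟨j0, hmem⟩ := EndPos.mem_of_infix hi0
    have hj0 : w.length < j0 :=
      lt_of_le_of_ne hmem.1 (fun h => hnp i0 (EndPos.prefix_of_mem hmem h.symm))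
    obtain ⟨a, ha⟩ := EndPos.exists_cons hmem hj0
    apply hi a
    apply Set.Subset.antisymm (EndPos.cons_subset a)
    rintro ⟨i, j⟩ hm
    have hj : w.length < j :=
      lt_of_le_of_ne hm.1 (fun h => hnp i (EndPos.prefix_of_mem hm h.symm))
    obtain ⟨b, hb⟩ := EndPos.exists_cons hm hj
    have hab : a = b := by
      by_contra hne
      exact hnb a b hne ⟨i0, EndPos.infix_of_mem ha⟩ i (EndPos.infix_of_mem hb)
    rw [hab]
    exact hb
  · rintro (⟨i, hp⟩ | ⟨a, b, hab, ⟨ia, hia⟩, ⟨ib, hib⟩⟩) c heq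
    · have hmem : (i, w.length) ∈ EndPos S w := by
        refine ⟨le_rfl, hp.length_le, ?_⟩
        rw [Nat.sub_self, List.drop_zero]
        exact List.prefix_iff_eq_take.mp hp
      rw [← heq] at hmem
      have := hmem.1
      simp only [List.length_cons] at this
      omega
    · have key : ∀ d : α, (∃ i, (d :: w) <:+: S i) → d = c := by
        rintro d ⟨i, hd⟩
        obtain ⟨j, hj⟩ := EndPos.mem_of_infix hd
        have hw' : (i, j) ∈ EndPos S (c :: w) := by
          rw [heq]
          exact EndPos.cons_subset d hj
        exact EndPos.head_eq hj hw'
      exact hab ((key a ⟨ia, hia⟩).trans (key b ⟨ib, hib⟩).symm)
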